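/- For an operator T : E → F between Banach lattices, the following are equivalent: (1) T is order L-weakly compact; (2) for every Banach space X and every strong order bounded operator S : X → E, the composition T ∘ S is L-weakly compact; (3) for every strong order bounded operator S : ℓ¹ → E, the composition T ∘ S is L-weakly compact. -/

import Mathlib

open Filter Topology NormedSpace

open Filter Topology

section Defs

/-- A sequence in a lattice ordered group is pairwise disjoint. -/
def DisjSeq {G : Type*} [Lattice G] [AddCommGroup G] (y : ℕ → G) : Prop :=
  ∀ m n : ℕ, m ≠ n → |y m| ⊓ |y n| = 0

/-- The solid hull of a set. -/
def SolidHull {G : Type*} [Lattice G] [AddCommGroup G] (A : Set G) : Set G :=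
  {z | ∃ a ∈ A, |z| ≤ |a|}

/-- A sequence is order bounded. -/
def OrdBddSeq {G : Type*} [Preorder G] (y : ℕ → G) : Prop :=
  ∃ a b : G, ∀ n, a ≤ y n ∧ y n ≤ b

/-- A set is L-weakly compact: every disjoint sequence in its solid hull is norm null. -/
def LWCompactSet {G : Type*} [NormedAddCommGroup G] [Lattice G] (A : Set G) : Prop :=
  ∀ y : ℕ → G, (∀ n, y n ∈ SolidHull A) → DisjSeq y →
    Tendsto (fun n => ‖y n‖) atTop (𝓝 0)

/-- An operator is order L-weakly compact. -/
def OrderLWC {G H : Type*} [NormedAddCommGroup G] [Lattice G] [NormedSpace ℝ G]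
    [NormedAddCommGroup H] [Lattice H] [NormedSpace ℝ H] (T : G →L[ℝ] H) : Prop :=
  ∀ x : G, 0 ≤ x → LWCompactSet (T '' Set.Icc 0 x)

/-- An operator is L-weakly compact. -/
def LWC {X H : Type*} [NormedAddCommGroup X] [NormedSpace ℝ X]
    [NormedAddCommGroup H] [Lattice H] [NormedSpace ℝ H] (T : X →L[ℝ] H) : Prop :=
  LWCompactSet (T '' Metric.closedBall 0 1)

/-- An operator is M-weakly compact. -/
def MWC {G Y : Type*} [NormedAddCommGroup G] [Lattice G] [NormedSpace ℝ G]
    [NormedAddCommGroup Y] [NormedSpace ℝ Y] (T : G →L[ℝ] Y) : Prop :=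
  ∀ x : ℕ → G, (∃ C, ∀ n, ‖x n‖ ≤ C) → DisjSeq x →
    Tendsto (fun n => ‖T (x n)‖) atTop (𝓝 0)

/-- An operator is order M-weakly compact. -/
def OrderMWC {G H : Type*} [NormedAddCommGroup G] [Lattice G] [NormedSpace ℝ G]
    [NormedAddCommGroup H] [NormedSpace ℝ H] [Lattice (StrongDual ℝ H)]
    (T : G →L[ℝ] H) : Prop :=
  ∀ x : ℕ → G, (∀ n, ‖x n‖ ≤ 1) → DisjSeq x →
    ∀ f : ℕ → StrongDual ℝ H, OrdBddSeq f →
      Tendsto (fun n => f n (T (x n))) atTop (𝓝 0)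

/-- The norm is order continuous: every decreasing net with infimum `0` is norm null. -/
def OrderContinuousNorm (G : Type*) [NormedAddCommGroup G] [Lattice G] : Prop :=
  ∀ (ι : Type*) [Preorder ι] [Nonempty ι] [IsDirected ι (· ≤ ·)] (x : ι → G),
    Antitone x → IsGLB (Set.range x) 0 → Tendsto (fun i => ‖x i‖) atTop (𝓝 0)

/-- An operator between Banach lattices is order bounded. -/
def OrderBoundedOp {G H : Type*} [NormedAddCommGroup G] [Lattice G] [NormedSpace ℝ G]
    [NormedAddCommGroup H] [Lattice H] [NormedSpace ℝ H] (T : G →L[ℝ] H) : Prop :=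
  ∀ a b : G, ∃ c d : H, ∀ x : G, a ≤ x → x ≤ b → c ≤ T x ∧ T x ≤ d

/-- An operator into a Banach lattice is strong order bounded. -/
def StrongOrderBounded {X H : Type*} [NormedAddCommGroup X] [NormedSpace ℝ X]
    [NormedAddCommGroup H] [Lattice H] [NormedSpace ℝ H] (T : X →L[ℝ] H) : Prop :=
  ∃ a b : H, ∀ x : X, ‖x‖ ≤ 1 → a ≤ T x ∧ T x ≤ b

end Defs


section Aux

open Filter Topology

variable {G : Type*} [NormedAddCommGroup G] [Lattice G] [IsOrderedAddMonoid G] [HasSolidNorm G]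

private lemma half_nonneg (w : G) (h : 0 ≤ w + w) : 0 ≤ w := by
  have h1 : -w ≤ w := by rw [neg_le_iff_add_nonneg]; exact h
  have h2 : w⁻ ≤ w⁺ := sup_le_sup_right h1 0
  have h3 : w⁻ = 0 := by
    have h4 := posPart_inf_negPart_eq_zero w
    rw [inf_eq_right.2 h2] at h4
    exact h4
  exact negPart_eq_zero.1 h3

private lemma pow_two_smul_nonneg [NormedSpace ℝ G] (k : ℕ) (w : G)
    (h : 0 ≤ ((2:ℝ)^k) • w) : 0 ≤ w := by
  induction k generalizing w with
  | zero => simpa using h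
  | succ k ih =>
    have h1 : ((2:ℝ)^(k+1)) • w = ((2:ℝ)^k) • (w + w) := by
      rw [pow_succ, mul_smul, two_smul]
    rw [h1] at h
    exact half_nonneg w (ih _ h)

private lemma real_smul_nonneg [NormedSpace ℝ G] {c : ℝ} (hc : 0 ≤ c) {z : G} (hz : 0 ≤ z) :
    0 ≤ c • z := by
  have hdy : ∀ k : ℕ, 0 ≤ ((Nat.floor (2^k * c) : ℝ)/2^k) • z := by
    intro k
    have h2 : (0:ℝ) < 2^k := by positivity
    refine pow_two_smul_nonneg k _ ?_
    rw [← mul_smul, mul_div_cancel₀ _ h2.ne', Nat.cast_smul_eq_nsmul]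
    exact nsmul_nonneg hz _
  have hconv : Tendsto (fun k : ℕ => ((Nat.floor (2^k * c) : ℝ)/2^k) • z) atTop (𝓝 (c • z)) := by
    refine Tendsto.smul_const ?_ z
    have h : ∀ k : ℕ, |(Nat.floor (2^k * c) : ℝ)/2^k - c| ≤ (1/2)^k := by
      intro k
      have h2 : (0:ℝ) < 2^k := by positivity
      have h3 : ((1:ℝ)/2)^k * 2^k = 1 := by rw [← mul_pow]; norm_num
      rw [abs_le]
      constructor
      · have h4 := Nat.lt_floor_add_one ((2:ℝ)^k * c)
        rw [div_sub' h2.ne', le_div_iff₀ h2]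
        nlinarith [h4]
      · have h4 := Nat.floor_le (mul_nonneg (le_of_lt h2) hc)
        rw [div_sub' h2.ne', div_le_iff₀ h2]
        nlinarith [h4]
    have h2 : Tendsto (fun k : ℕ => ((1:ℝ)/2)^k) atTop (𝓝 0) := by
      apply tendsto_pow_atTop_nhds_zero_of_lt_one <;> norm_num
    have h5 := squeeze_zero (fun k => abs_nonneg _) h h2
    rw [← tendsto_sub_nhds_zero_iff]
    exact (tendsto_zero_iff_abs_tendsto_zero _).2 h5
  exact ge_of_tendsto hconv (Eventually.of_forall hdy)

private lemma smul_mono_left₁ [NormedSpace ℝ G] {c : ℝ} (hc : 0 ≤ c) {z w : G} (h : z ≤ w) :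
    c • z ≤ c • w := by
  rw [← sub_nonneg, ← smul_sub]
  exact real_smul_nonneg hc (sub_nonneg.2 h)

private lemma smul_mono_right₁ [NormedSpace ℝ G] {c d : ℝ} (h : c ≤ d) {z : G} (hz : 0 ≤ z) :
    c • z ≤ d • z := by
  rw [← sub_nonneg, ← sub_smul]
  exact real_smul_nonneg (sub_nonneg.2 h) hz

private lemma smul_le_abs_smul [NormedSpace ℝ G] (a : ℝ) {z x : G} (h0 : 0 ≤ z) (hz : z ≤ x) :
    a • z ≤ |a| • x :=
  le_trans (smul_mono_right₁ (le_abs_self a) h0) (smul_mono_left₁ (abs_nonneg a) hz)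

private lemma neg_abs_smul_le_smul [NormedSpace ℝ G] (a : ℝ) {z x : G} (h0 : 0 ≤ z) (hz : z ≤ x) :
    -(|a| • x) ≤ a • z := by
  have h1 : -(a • z) ≤ |a| • x := by
    rw [← neg_smul]
    exact (smul_le_abs_smul (-a) h0 hz).trans_eq (by rw [abs_neg])
  exact neg_le.1 h1

private lemma lwc_mono {A B : Set G} (h : A ⊆ B) (hB : LWCompactSet B) : LWCompactSet A := by
  intro y hy hd
  refine hB y (fun n => ?_) hd
  obtain ⟨a, ha, hle⟩ := hy n
  exact ⟨a, h ha, hle⟩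

private lemma lwc_pair {A B : Set G} (hA : LWCompactSet A) (hB : LWCompactSet B) :
    LWCompactSet {z : G | ∃ a ∈ A, ∃ b ∈ B, |z| ≤ |a| + |b|} := by
  intro y hy hd
  choose w hw habs using hy
  choose a ha b hb hle using hw
  have hyn : ∀ n, |y n| ≤ |a n| + |b n| := fun n => (habs n).trans (hle n)
  set u : ℕ → G := fun n => |y n| ⊓ |a n| with hu
  set v : ℕ → G := fun n => |y n| - u n with hv
  have hu0 : ∀ n, 0 ≤ u n := fun n => le_inf (abs_nonneg _) (abs_nonneg _)
  have huy : ∀ n, u n ≤ |y n| := fun n => inf_le_left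
  have hv0 : ∀ n, 0 ≤ v n := fun n => sub_nonneg.2 (huy n)
  have hvy : ∀ n, v n ≤ |y n| := fun n => sub_le_self _ (hu0 n)
  have hvb : ∀ n, v n ≤ |b n| := by
    intro n
    have h1 : v n = (|y n| - |y n|) ⊔ (|y n| - |a n|) := by
      simp only [hv, hu]
      exact sub_inf _ _ _
    rw [h1, sub_self]
    exact sup_le (abs_nonneg _) (sub_le_iff_le_add'.2 (hyn n))
  have hdu : DisjSeq u := by
    intro m n hmn
    rw [abs_of_nonneg (hu0 m), abs_of_nonneg (hu0 n)]
    refine le_antisymm ?_ (le_inf (hu0 m) (hu0 n))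
    calc u m ⊓ u n ≤ |y m| ⊓ |y n| := inf_le_inf (huy m) (huy n)
      _ = 0 := hd m n hmn
  have hdv : DisjSeq v := by
    intro m n hmn
    rw [abs_of_nonneg (hv0 m), abs_of_nonneg (hv0 n)]
    refine le_antisymm ?_ (le_inf (hv0 m) (hv0 n))
    calc v m ⊓ v n ≤ |y m| ⊓ |y n| := inf_le_inf (hvy m) (hvy n)
      _ = 0 := hd m n hmn
  have hA' := hA u (fun n => ⟨a n, ha n, by rw [abs_of_nonneg (hu0 n)]; exact inf_le_right⟩) hdu
  have hB' := hB v (fun n => ⟨b n, hb n, by rw [abs_of_nonneg (hv0 n)]; exact hvb n⟩) hdv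
  have hbound : ∀ n, ‖y n‖ ≤ ‖u n‖ + ‖v n‖ := by
    intro n
    have h1 : u n + v n = |y n| := by
      show u n + (|y n| - u n) = |y n|
      rw [add_comm, sub_add_cancel]
    calc ‖y n‖ = ‖|y n|‖ := (norm_abs_eq_norm _).symm
      _ = ‖u n + v n‖ := by rw [h1]
      _ ≤ ‖u n‖ + ‖v n‖ := norm_add_le _ _
  have hlim : Tendsto (fun n => ‖u n‖ + ‖v n‖) atTop (𝓝 0) := by
    simpa using hA'.add hB'
  exact squeeze_zero (fun n => norm_nonneg _) hbound hlim

private lemma lwc_triple {A B C : Set G} (hA : LWCompactSet A) (hB : LWCompactSet B)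
    (hC : LWCompactSet C) :
    LWCompactSet {z : G | ∃ a ∈ A, ∃ b ∈ B, ∃ c ∈ C, |z| ≤ |a| + |b| + |c|} := by
  refine lwc_mono ?_ (lwc_pair (lwc_pair hA hB) hC)
  rintro z ⟨a, ha, b, hb, c, hc, hle⟩
  have hab : (0:G) ≤ |a| + |b| := add_nonneg (abs_nonneg _) (abs_nonneg _)
  exact ⟨|a| + |b|, ⟨a, ha, b, hb, (abs_of_nonneg hab).le⟩, c, hc, by
    rwa [abs_of_nonneg hab]⟩

end Aux

private lemma labs_add {G : Type*} [NormedAddCommGroup G] [Lattice G] [IsOrderedAddMonoid G] [HasSolidNorm G] (a b : G) :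
    |a + b| ≤ |a| + |b| :=
  abs_le'.2 ⟨add_le_add (le_abs_self a) (le_abs_self b),
    by rw [neg_add]; exact add_le_add (neg_le_abs a) (neg_le_abs b)⟩

set_option maxHeartbeats 1000000 in
private theorem key12 {E F : Type*} [NormedAddCommGroup E] [Lattice E] [IsOrderedAddMonoid E] [HasSolidNorm E] [NormedSpace ℝ E]
    [CompleteSpace E] [NormedAddCommGroup F] [Lattice F] [IsOrderedAddMonoid F] [HasSolidNorm F] [NormedSpace ℝ F] [CompleteSpace F]
    (T : E →L[ℝ] F) (hT : OrderLWC T) (X : Type*) [NormedAddCommGroup X] [NormedSpace ℝ X]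
    [CompleteSpace X] (S : X →L[ℝ] E) (hS : StrongOrderBounded S) : LWC (T.comp S) := by
  obtain ⟨a, b, hab⟩ := hS
  have ha0 : a ≤ 0 := by
    have h0 := hab 0 (by simp)
    simpa using h0.1
  have h0b : (0:E) ≤ b := by
    have h0 := hab 0 (by simp)
    simpa using h0.2
  have hA := hT a⁺ (posPart_nonneg a)
  have hB := hT a⁻ (negPart_nonneg a)
  have hC := hT (b - a) (sub_nonneg.2 (ha0.trans h0b))
  refine lwc_mono ?_ (lwc_triple hA hB hC)
  rintro z ⟨xx, hxx, rfl⟩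
  rw [Metric.mem_closedBall, dist_zero_right] at hxx
  obtain ⟨h1, h2⟩ := hab xx hxx
  have hx : S xx = a⁺ - a⁻ + (S xx - a) := by
    rw [posPart_sub_negPart]; abel
  have hrw : (T.comp S) xx = T a⁺ - T a⁻ + T (S xx - a) := by
    rw [ContinuousLinearMap.comp_apply]
    conv_lhs => rw [hx]
    rw [map_add, map_sub]
  refine ⟨T a⁺, ⟨a⁺, Set.mem_Icc.2 ⟨posPart_nonneg a, le_refl _⟩, rfl⟩,
    T a⁻, ⟨a⁻, Set.mem_Icc.2 ⟨negPart_nonneg a, le_refl _⟩, rfl⟩,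
    T (S xx - a), ⟨S xx - a, Set.mem_Icc.2 ⟨sub_nonneg.2 h1, sub_le_sub_right h2 a⟩, rfl⟩, ?_⟩
  rw [hrw]
  calc |T a⁺ - T a⁻ + T (S xx - a)|
      ≤ |T a⁺ - T a⁻| + |T (S xx - a)| := labs_add _ _
    _ ≤ |T a⁺| + |T a⁻| + |T (S xx - a)| := by
        refine add_le_add ?_ le_rfl
        rw [sub_eq_add_neg]
        exact (labs_add _ _).trans (by rw [abs_neg])

set_option maxHeartbeats 1000000 in
private theorem key23 {E F : Type*} [NormedAddCommGroup E] [Lattice E] [IsOrderedAddMonoid E] [HasSolidNorm E] [NormedSpace ℝ E]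
    [CompleteSpace E] [NormedAddCommGroup F] [Lattice F] [IsOrderedAddMonoid F] [HasSolidNorm F] [NormedSpace ℝ F] [CompleteSpace F]
    (T : E →L[ℝ] F)
    (h2 : ∀ (X : Type*) [NormedAddCommGroup X] [NormedSpace ℝ X] [CompleteSpace X]
      (S : X →L[ℝ] E), StrongOrderBounded S → LWC (T.comp S)) :
    ∀ S : lp (fun _ : ℕ => ℝ) 1 →L[ℝ] E, StrongOrderBounded S → LWC (T.comp S) := by
  intro S hS
  let D : ULift (lp (fun _ : ℕ => ℝ) 1) →L[ℝ] lp (fun _ : ℕ => ℝ) 1 :=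
    { toFun := ULift.down
      map_add' := fun _ _ => rfl
      map_smul' := fun _ _ => rfl
      cont := continuous_uliftDown }
  have hS' : StrongOrderBounded (S.comp D) := by
    obtain ⟨a, b, hab⟩ := hS
    exact ⟨a, b, fun v hv => hab v.down hv⟩
  have hLWC := h2 _ (S.comp D) hS'
  rw [LWC] at hLWC ⊢
  refine lwc_mono ?_ hLWC
  rintro _ ⟨v, hv, rfl⟩
  refine ⟨ULift.up v, ?_, rfl⟩
  rw [Metric.mem_closedBall, dist_zero_right] at hv ⊢
  exact hv

set_option maxHeartbeats 2000000 in
theorem stmt15 {E F : Type*} [NormedAddCommGroup E] [Lattice E] [IsOrderedAddMonoid E] [HasSolidNorm E] [NormedSpace ℝ E] [CompleteSpace E]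
    [NormedAddCommGroup F] [Lattice F] [IsOrderedAddMonoid F] [HasSolidNorm F] [NormedSpace ℝ F] [CompleteSpace F]
    (T : E →L[ℝ] F) :
    (OrderLWC T ↔
      ∀ (X : Type*) [NormedAddCommGroup X] [NormedSpace ℝ X] [CompleteSpace X]
        (S : X →L[ℝ] E), StrongOrderBounded S → LWC (T.comp S)) ∧
    (OrderLWC T ↔
      ∀ S : lp (fun _ : ℕ => ℝ) 1 →L[ℝ] E, StrongOrderBounded S → LWC (T.comp S)) := by
  classical
  -- (3) → (1)
  have h31 : (∀ S : lp (fun _ : ℕ => ℝ) 1 →L[ℝ] E, StrongOrderBounded S → LWC (T.comp S)) →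
      OrderLWC T := by
    intro h3 x hx y hy hd
    choose w hw habs using hy
    choose z hz hTz using hw
    have hz0 : ∀ n, 0 ≤ z n := fun n => (hz n).1
    have hzx : ∀ n, z n ≤ x := fun n => (hz n).2
    have hnz : ∀ n, ‖z n‖ ≤ ‖x‖ := by
      intro n
      refine norm_le_norm_of_abs_le_abs ?_
      rw [abs_of_nonneg (hz0 n), abs_of_nonneg ((hz0 n).trans (hzx n))]
      exact hzx n
    have hα : ∀ α : lp (fun _ : ℕ => ℝ) 1, Summable (fun n => ‖α n‖) := by
      intro α
      have h1 := (lp.memℓp α).summable (p := 1) (by norm_num)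
      simpa using h1
    have hαn : ∀ α : lp (fun _ : ℕ => ℝ) 1, ∑' n, ‖α n‖ = ‖α‖ := by
      intro α
      have h1 := (lp.hasSum_norm (p := 1) (by norm_num) α).tsum_eq
      simpa using h1
    have hsn : ∀ α : lp (fun _ : ℕ => ℝ) 1, Summable (fun n => ‖α n • z n‖) := by
      intro α
      refine Summable.of_nonneg_of_le (fun n => norm_nonneg _) (fun n => ?_)
        ((hα α).mul_right ‖x‖)
      rw [norm_smul]
      exact mul_le_mul_of_nonneg_left (hnz n) (norm_nonneg _)
    have hsum : ∀ α : lp (fun _ : ℕ => ℝ) 1, Summable (fun n => α n • z n) :=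
      fun α => (hsn α).of_norm
    let S₀ : lp (fun _ : ℕ => ℝ) 1 →ₗ[ℝ] E :=
      { toFun := fun α => ∑' n, α n • z n
        map_add' := fun α β => by
          show (∑' n, (α + β : lp (fun _ : ℕ => ℝ) 1) n • z n)
            = (∑' n, α n • z n) + ∑' n, β n • z n
          have h1 : ∀ n, (α + β : lp (fun _ : ℕ => ℝ) 1) n • z n
              = α n • z n + β n • z n := by
            intro n
            rw [lp.coeFn_add, Pi.add_apply, add_smul]
          rw [tsum_congr h1]
          exact Summable.tsum_add (hsum α) (hsum β)
        map_smul' := fun c α => by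
          show (∑' n, (c • α : lp (fun _ : ℕ => ℝ) 1) n • z n) = c • ∑' n, α n • z n
          have h1 : ∀ n, (c • α : lp (fun _ : ℕ => ℝ) 1) n • z n = c • (α n • z n) := by
            intro n
            rw [lp.coeFn_smul, Pi.smul_apply, smul_eq_mul, mul_smul]
          rw [tsum_congr h1]
          exact tsum_const_smul'' c }
    have hbound : ∀ α : lp (fun _ : ℕ => ℝ) 1, ‖S₀ α‖ ≤ ‖x‖ * ‖α‖ := by
      intro α
      calc ‖∑' n, α n • z n‖ ≤ ∑' n, ‖α n • z n‖ := norm_tsum_le_tsum_norm (hsn α)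
        _ ≤ ∑' n, ‖α n‖ * ‖x‖ := by
            refine Summable.tsum_le_tsum (fun n => ?_) (hsn α) ((hα α).mul_right ‖x‖)
            rw [norm_smul]
            exact mul_le_mul_of_nonneg_left (hnz n) (norm_nonneg _)
        _ = (∑' n, ‖α n‖) * ‖x‖ := ((hα α).tsum_mul_right ‖x‖)
        _ = ‖x‖ * ‖α‖ := by rw [hαn α, mul_comm]
    let S : lp (fun _ : ℕ => ℝ) 1 →L[ℝ] E := S₀.mkContinuous ‖x‖ hbound
    have hSapp : ∀ α : lp (fun _ : ℕ => ℝ) 1, S α = ∑' n, α n • z n := fun _ => rfl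
    have hSOB : StrongOrderBounded S := by
      refine ⟨-x, x, fun α hα1 => ?_⟩
      have hs1 : ∀ s : Finset ℕ, ∑ n ∈ s, |α n| ≤ 1 := by
        intro s
        refine le_trans (Summable.sum_le_tsum s (fun n _ => abs_nonneg _) (show Summable (fun n => |α n|) from ?_)) ?_
        · simpa [Real.norm_eq_abs] using hα α
        · have h1 := hαn α
          simp only [Real.norm_eq_abs] at h1
          rw [h1]
          exact hα1
      have hub : ∀ s : Finset ℕ, ∑ n ∈ s, α n • z n ≤ x := by
        intro s
        calc ∑ n ∈ s, α n • z n ≤ ∑ n ∈ s, |α n| • x :=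
              Finset.sum_le_sum (fun n _ => smul_le_abs_smul (α n) (hz0 n) (hzx n))
          _ = (∑ n ∈ s, |α n|) • x := (Finset.sum_smul).symm
          _ ≤ (1:ℝ) • x := smul_mono_right₁ (hs1 s) hx
          _ = x := one_smul ℝ x
      have hlb : ∀ s : Finset ℕ, -x ≤ ∑ n ∈ s, α n • z n := by
        intro s
        have hlb' : -(∑ n ∈ s, α n • z n) ≤ x := by
          rw [← Finset.sum_neg_distrib]
          calc ∑ n ∈ s, -(α n • z n) = ∑ n ∈ s, (-(α n)) • z n := by
                refine Finset.sum_congr rfl (fun n _ => ?_)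
                rw [neg_smul]
            _ ≤ ∑ n ∈ s, |α n| • x :=
                Finset.sum_le_sum (fun n _ =>
                  (smul_le_abs_smul (-(α n)) (hz0 n) (hzx n)).trans_eq (by rw [abs_neg]))
            _ = (∑ n ∈ s, |α n|) • x := (Finset.sum_smul).symm
            _ ≤ (1:ℝ) • x := smul_mono_right₁ (hs1 s) hx
            _ = x := one_smul ℝ x
        exact neg_le.1 hlb'
      have htend : Tendsto (fun s : Finset ℕ => ∑ n ∈ s, α n • z n) atTop (𝓝 (S α)) := by
        rw [hSapp]
        exact (hsum α).hasSum
      exact ⟨ge_of_tendsto htend (Eventually.of_forall hlb),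
        le_of_tendsto htend (Eventually.of_forall hub)⟩
    have hLWC := h3 S hSOB
    have hsingle : ∀ n, S (lp.single 1 n (1:ℝ)) = z n := by
      intro n
      rw [hSapp]
      refine tsum_eq_single n (fun m hmn => ?_) |>.trans ?_
      · rw [lp.single_apply_ne _ _ _ hmn, zero_smul]
      · rw [lp.single_apply_self, one_smul]
    refine hLWC y (fun n => ?_) hd
    refine ⟨(T.comp S) (lp.single 1 n (1:ℝ)), ⟨lp.single 1 n (1:ℝ), ?_, rfl⟩, ?_⟩
    · rw [Metric.mem_closedBall, dist_zero_right]
      have h1 := lp.norm_single (p := 1) (E := fun _ : ℕ => ℝ) (by norm_num)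
        n (1:ℝ)
      rw [h1]
      norm_num
    · have h1 : (T.comp S) (lp.single 1 n (1:ℝ)) = T (z n) := by
        rw [ContinuousLinearMap.comp_apply, hsingle n]
      rw [h1, hTz n]
      exact habs n
  exact ⟨⟨fun h X _ _ _ S hS => key12 T h X S hS,
      fun h => h31 (key23 T (fun X _ _ _ S hS => h X S hS))⟩,
    ⟨fun h S hS => key12 T h _ S hS, h31⟩⟩
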